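/- For every 0 < ε ≤ 1/8, the μ-mass of the margin region satisfies μ({x : |η(x) − 1/2| ≤ ε}) ≤ min(1, 10·ε/Δ). -/

import Mathlib

open MeasureTheory Real

/-- Standard Gaussian density on `ℝ^d`. -/
noncomputable def stdGaussianDensity (d : ℕ) (x : EuclideanSpace ℝ (Fin d)) : ℝ :=
  (2 * π) ^ (-(d : ℝ) / 2) * Real.exp (-‖x‖ ^ 2 / 2)

/-- Regression function of the Gaussian translation model:
`η(x) = γ_d(x − m) / (γ_d(x) + γ_d(x − m))`. -/
noncomputable def gaussEta (d : ℕ) (m : EuclideanSpace ℝ (Fin d))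
    (x : EuclideanSpace ℝ (Fin d)) : ℝ :=
  stdGaussianDensity d (x - m) / (stdGaussianDensity d x + stdGaussianDensity d (x - m))

/-- Marginal (mixture) law of the design: density `(γ_d(x) + γ_d(x − m))/2`
with respect to Lebesgue measure. -/
noncomputable def gaussMixture (d : ℕ) (m : EuclideanSpace ℝ (Fin d)) :
    Measure (EuclideanSpace ℝ (Fin d)) :=
  volume.withDensity fun x =>
    ENNReal.ofReal ((stdGaussianDensity d x + stdGaussianDensity d (x - m)) / 2)

noncomputable def gaussPhi : ℝ → ℝ := fun t => (2 * π) ^ (-(1:ℝ) / 2) * Real.exp (-t ^ 2 / 2)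

lemma gaussPhi_nonneg (t : ℝ) : 0 ≤ gaussPhi t := by
  unfold gaussPhi; positivity

lemma gaussPhi_le_half (t : ℝ) : gaussPhi t ≤ 1 / 2 := by
  unfold gaussPhi
  have h1 : Real.exp (-t ^ 2 / 2) ≤ 1 := by
    rw [Real.exp_le_one_iff]; nlinarith [sq_nonneg t]
  have hpos : (0:ℝ) < (2 * π) ^ ((1:ℝ) / 2) := Real.rpow_pos_of_pos Real.two_pi_pos _
  have h2 : (2 * π) ^ (-(1:ℝ) / 2) ≤ 1 / 2 := by
    have h4 : (2:ℝ) ≤ (2 * π) ^ ((1:ℝ) / 2) := by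
      rw [← Real.sqrt_eq_rpow]
      have : (2:ℝ) = Real.sqrt 4 := by
        rw [show (4:ℝ) = 2 ^ 2 by norm_num, Real.sqrt_sq (by norm_num)]
      rw [this]
      exact Real.sqrt_le_sqrt (by nlinarith [Real.pi_gt_three])
    rw [show -(1:ℝ)/2 = -((1:ℝ)/2) by norm_num, Real.rpow_neg (le_of_lt Real.two_pi_pos)]
    have : ((2 * π) ^ ((1:ℝ)/2))⁻¹ * ((2 * π) ^ ((1:ℝ)/2)) = 1 :=
      inv_mul_cancel₀ (ne_of_gt hpos)
    nlinarith
  calc (2 * π) ^ (-(1:ℝ) / 2) * Real.exp (-t ^ 2 / 2) ≤ (1/2) * 1 := by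
        apply mul_le_mul h2 h1 (Real.exp_nonneg _) (by norm_num)
    _ = 1/2 := by norm_num

lemma integrable_gaussPhi : Integrable gaussPhi := by
  have h := (integrable_exp_neg_mul_sq (b := (1:ℝ)/2) (by norm_num)).const_mul
    ((2 * π) ^ (-(1:ℝ) / 2))
  have he : gaussPhi = fun t => (2 * π) ^ (-(1:ℝ) / 2) * Real.exp (-(1/2 : ℝ) * t ^ 2) := by
    funext t; unfold gaussPhi; ring_nf
  rw [he]; exact h

lemma integral_gaussPhi : ∫ t, gaussPhi t = 1 := by
  have : gaussPhi = fun t => (2 * π) ^ (-(1:ℝ) / 2) * Real.exp (-((1:ℝ)/2) * t ^ 2) := by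
    funext t; unfold gaussPhi; ring_nf
  rw [this, integral_const_mul, integral_gaussian]
  have h4 : Real.sqrt (π / (1/2 : ℝ)) = (2 * π) ^ ((1:ℝ) / 2) := by
    rw [← Real.sqrt_eq_rpow]; congr 1; ring
  rw [h4, ← Real.rpow_add Real.two_pi_pos]
  norm_num

lemma setIntegral_gaussPhi_le {a b : ℝ} (hab : a ≤ b) :
    ∫ t in Set.Icc a b, gaussPhi t ≤ (b - a) / 2 := by
  have h : ∫ t in Set.Icc a b, gaussPhi t ≤ ∫ _t in Set.Icc a b, (1/2 : ℝ) :=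
    setIntegral_mono_on integrable_gaussPhi.integrableOn
      (integrableOn_const measure_Icc_lt_top.ne) measurableSet_Icc
      (fun t _ => gaussPhi_le_half t)
  rw [setIntegral_const, Real.volume_real_Icc_of_le hab] at h
  calc ∫ t in Set.Icc a b, gaussPhi t ≤ (b - a) • (1/2 : ℝ) := h
    _ = (b - a) / 2 := by simp [smul_eq_mul]; ring

lemma integrable_pi_gaussPhi (d : ℕ) :
    Integrable (fun y : Fin d → ℝ => ∏ i, gaussPhi (y i)) :=
  Integrable.fintype_prod (f := fun _ : Fin d => gaussPhi) (fun _ => integrable_gaussPhi)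

lemma integral_pi_gaussPhi (d : ℕ) : ∫ y : Fin d → ℝ, ∏ i, gaussPhi (y i) = 1 := by
  rw [MeasureTheory.integral_fintype_prod_volume_eq_prod (ι := Fin d) (fun _ => gaussPhi)]
  simp [integral_gaussPhi]

lemma pi_slab (d : ℕ) (i0 : Fin d) {a b : ℝ} (hab : a ≤ b) :
    ∫ y in {y : Fin d → ℝ | y i0 ∈ Set.Icc a b}, ∏ i, gaussPhi (y i) ≤ (b - a) / 2 := by
  have hset : MeasurableSet {y : Fin d → ℝ | y i0 ∈ Set.Icc a b} :=
    (measurable_pi_apply i0) measurableSet_Icc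
  rw [← integral_indicator hset]
  set f : Fin d → ℝ → ℝ :=
    fun i => if i = i0 then Set.indicator (Set.Icc a b) gaussPhi else gaussPhi with hf
  have hind : ∀ y : Fin d → ℝ,
      Set.indicator {y : Fin d → ℝ | y i0 ∈ Set.Icc a b} (fun y => ∏ i, gaussPhi (y i)) y
        = ∏ i, f i (y i) := by
    intro y
    by_cases hy : y i0 ∈ Set.Icc a b
    · rw [Set.indicator_of_mem (show y ∈ {y : Fin d → ℝ | y i0 ∈ Set.Icc a b} from hy)]
      refine (Finset.prod_congr rfl (fun i _ => ?_)).symm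
      rw [hf]
      by_cases hi : i = i0
      · subst hi; simp [Set.indicator_of_mem hy]
      · simp [hi]
    · rw [Set.indicator_of_notMem (show y ∉ {y : Fin d → ℝ | y i0 ∈ Set.Icc a b} from hy)]
      refine (Finset.prod_eq_zero (Finset.mem_univ i0) ?_).symm
      simp [hf, Set.indicator_of_notMem hy]
  simp_rw [hind]
  rw [MeasureTheory.integral_fintype_prod_volume_eq_prod (ι := Fin d) f]
  have hval : ∀ i, (∫ x, f i x) = if i = i0 then ∫ t in Set.Icc a b, gaussPhi t else 1 := by
    intro i
    rw [hf]
    by_cases hi : i = i0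
    · simp only [hi, if_true]
      rw [integral_indicator measurableSet_Icc]
    · simp only [hi, if_false]
      exact integral_gaussPhi
  simp_rw [hval]
  rw [Finset.prod_ite_eq' Finset.univ i0 (fun _ => ∫ t in Set.Icc a b, gaussPhi t)]
  simp only [Finset.mem_univ, if_true]
  exact setIntegral_gaussPhi_le hab

lemma stdGaussianDensity_pos {d : ℕ} (x : EuclideanSpace ℝ (Fin d)) :
    0 < stdGaussianDensity d x := by
  unfold stdGaussianDensity
  exact mul_pos (Real.rpow_pos_of_pos Real.two_pi_pos _) (Real.exp_pos _)

lemma stdGaussianDensity_comp (d : ℕ) (y : Fin d → ℝ) :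
    stdGaussianDensity d (WithLp.toLp 2 y)
      = ∏ i, gaussPhi (y i) := by
  unfold stdGaussianDensity gaussPhi
  rw [EuclideanSpace.norm_eq, Real.sq_sqrt (by positivity)]
  simp only [WithLp.ofLp_toLp, Real.norm_eq_abs, sq_abs]
  rw [Finset.prod_mul_distrib, Finset.prod_const, ← Real.exp_sum, Finset.card_univ,
    Fintype.card_fin]
  rw [← Real.rpow_natCast ((2 * π) ^ (-(1:ℝ) / 2)) d,
    ← Real.rpow_mul (le_of_lt Real.two_pi_pos)]
  congr 1
  · ring
  · rw [← Finset.sum_div, ← Finset.sum_neg_distrib]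

lemma integrable_stdGaussianDensity (d : ℕ) : Integrable (stdGaussianDensity d) := by
  have hmp := PiLp.volume_preserving_toLp (Fin d)
  rw [← MeasurePreserving.integrable_comp_emb hmp (MeasurableEquiv.toLp 2 (Fin d → ℝ)).measurableEmbedding]
  have : stdGaussianDensity d ∘ WithLp.toLp 2
      = fun y : Fin d → ℝ => ∏ i, gaussPhi (y i) := by
    funext y; exact stdGaussianDensity_comp d y
  rw [this]
  exact integrable_pi_gaussPhi d

lemma integral_stdGaussianDensity (d : ℕ) :
    ∫ x : EuclideanSpace ℝ (Fin d), stdGaussianDensity d x = 1 := by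
  have hmp := PiLp.volume_preserving_toLp (Fin d)
  rw [← hmp.integral_comp (MeasurableEquiv.toLp 2 (Fin d → ℝ)).measurableEmbedding (stdGaussianDensity d)]
  simp_rw [stdGaussianDensity_comp d]
  exact integral_pi_gaussPhi d

lemma euclid_coord_slab (d : ℕ) (i0 : Fin d) {a b : ℝ} (hab : a ≤ b) :
    ∫ x in {x : EuclideanSpace ℝ (Fin d) | x i0 ∈ Set.Icc a b}, stdGaussianDensity d x
      ≤ (b - a) / 2 := by
  have hmp := PiLp.volume_preserving_toLp (Fin d)
  rw [← hmp.setIntegral_preimage_emb (MeasurableEquiv.toLp 2 (Fin d → ℝ)).measurableEmbedding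
    (stdGaussianDensity d) _]
  have hpre : WithLp.toLp 2 ⁻¹'
      {x : EuclideanSpace ℝ (Fin d) | x i0 ∈ Set.Icc a b}
      = {y : Fin d → ℝ | y i0 ∈ Set.Icc a b} := by
    ext y
    rfl
  rw [hpre]
  calc ∫ y in {y : Fin d → ℝ | y i0 ∈ Set.Icc a b},
        stdGaussianDensity d (WithLp.toLp 2 y)
      = ∫ y in {y : Fin d → ℝ | y i0 ∈ Set.Icc a b}, ∏ i, gaussPhi (y i) := by
        refine setIntegral_congr_fun ((measurable_pi_apply i0) measurableSet_Icc) ?_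
        intro y _; exact stdGaussianDensity_comp d y
    _ ≤ (b - a) / 2 := pi_slab d i0 hab

open RealInnerProductSpace in
lemma euclid_inner_slab (d : ℕ) (hd : 1 ≤ d) (u : EuclideanSpace ℝ (Fin d)) (hu : ‖u‖ = 1)
    {a b : ℝ} (hab : a ≤ b) :
    ∫ x in {x : EuclideanSpace ℝ (Fin d) | ⟪u, x⟫ ∈ Set.Icc a b}, stdGaussianDensity d x
      ≤ (b - a) / 2 := by
  set i0 : Fin d := ⟨0, hd⟩ with hi0
  have hcard : Module.finrank ℝ (EuclideanSpace ℝ (Fin d)) = Fintype.card (Fin d) := by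
    simp [finrank_euclideanSpace]
  have horth : Orthonormal ℝ (Set.restrict {i0} (fun _ : Fin d => u)) := by
    constructor
    · intro i; exact hu
    · intro i j hij
      exact absurd (Subtype.ext ((Set.eq_of_mem_singleton i.2).trans
        (Set.eq_of_mem_singleton j.2).symm)) hij
  obtain ⟨B, hB⟩ := horth.exists_orthonormalBasis_extension_of_card_eq hcard
  have hBu : B i0 = u := hB i0 rfl
  have hmp := B.measurePreserving_repr_symm
  rw [← hmp.setIntegral_preimage_emb B.repr.symm.toHomeomorph.measurableEmbedding
    (stdGaussianDensity d) _]
  have hpre : ⇑B.repr.symm ⁻¹' {x : EuclideanSpace ℝ (Fin d) | ⟪u, x⟫ ∈ Set.Icc a b}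
      = {y : EuclideanSpace ℝ (Fin d) | y i0 ∈ Set.Icc a b} := by
    ext y
    simp only [Set.mem_preimage, Set.mem_setOf_eq]
    rw [← hBu, ← B.repr_apply_apply, B.repr.apply_symm_apply]
  rw [hpre]
  have hγ : ∀ y : EuclideanSpace ℝ (Fin d),
      stdGaussianDensity d (B.repr.symm y) = stdGaussianDensity d y := by
    intro y; unfold stdGaussianDensity; rw [LinearIsometryEquiv.norm_map]
  calc ∫ y in {y : EuclideanSpace ℝ (Fin d) | y i0 ∈ Set.Icc a b},
        stdGaussianDensity d (B.repr.symm y)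
      = ∫ y in {y : EuclideanSpace ℝ (Fin d) | y i0 ∈ Set.Icc a b}, stdGaussianDensity d y := by
        refine setIntegral_congr_fun ?_ (fun y _ => hγ y)
        exact ((measurable_pi_apply i0).comp (MeasurableEquiv.toLp 2 (Fin d → ℝ)).symm.measurable)
          measurableSet_Icc
    _ ≤ (b - a) / 2 := euclid_coord_slab d i0 hab

open RealInnerProductSpace in
lemma euclid_inner_slab' (d : ℕ) (hd : 1 ≤ d) (u : EuclideanSpace ℝ (Fin d)) (hu : u ≠ 0)
    {a b : ℝ} (hab : a ≤ b) :
    ∫ x in {x : EuclideanSpace ℝ (Fin d) | ⟪u, x⟫ ∈ Set.Icc a b}, stdGaussianDensity d x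
      ≤ (b - a) / (2 * ‖u‖) := by
  have hn : (0:ℝ) < ‖u‖ := norm_pos_iff.mpr hu
  have hw : ‖(‖u‖⁻¹ • u : EuclideanSpace ℝ (Fin d))‖ = 1 := norm_smul_inv_norm hu
  have hinv : (0:ℝ) < ‖u‖⁻¹ := inv_pos.mpr hn
  have hset : {x : EuclideanSpace ℝ (Fin d) | ⟪u, x⟫ ∈ Set.Icc a b}
      = {x : EuclideanSpace ℝ (Fin d) |
          ⟪(‖u‖⁻¹ • u : EuclideanSpace ℝ (Fin d)), x⟫ ∈ Set.Icc (‖u‖⁻¹ * a) (‖u‖⁻¹ * b)} := by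
    ext x
    simp only [Set.mem_setOf_eq, Set.mem_Icc, real_inner_smul_left]
    constructor
    · rintro ⟨h1, h2⟩
      exact ⟨mul_le_mul_of_nonneg_left h1 hinv.le, mul_le_mul_of_nonneg_left h2 hinv.le⟩
    · rintro ⟨h1, h2⟩
      constructor <;> nlinarith [mul_le_mul_of_nonneg_left h1 hn.le,
        mul_le_mul_of_nonneg_left h2 hn.le, mul_inv_cancel₀ (ne_of_gt hn)]
  rw [hset]
  have h := euclid_inner_slab d hd _ hw
    (a := ‖u‖⁻¹ * a) (b := ‖u‖⁻¹ * b) (by nlinarith)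
  calc ∫ x in {x : EuclideanSpace ℝ (Fin d) |
        ⟪(‖u‖⁻¹ • u : EuclideanSpace ℝ (Fin d)), x⟫ ∈ Set.Icc (‖u‖⁻¹ * a) (‖u‖⁻¹ * b)},
        stdGaussianDensity d x ≤ (‖u‖⁻¹ * b - ‖u‖⁻¹ * a) / 2 := h
    _ = (b - a) / (2 * ‖u‖) := by rw [show (2:ℝ) * ‖u‖ = ‖u‖ * 2 by ring]; field_simp

set_option maxHeartbeats 1000000 in
open RealInnerProductSpace in
/-- Margin upper bound (Proposition 2.1 / Remark A.1, finite-dimensional form):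
for `0 < ε ≤ 1/8`, `μ(|η − 1/2| ≤ ε) ≤ min(1, 10ε/Δ)` with `Δ = ‖m‖`. -/
theorem margin_upper_bound (d : ℕ) (hd : 1 ≤ d)
    (m : EuclideanSpace ℝ (Fin d)) (hm : m ≠ 0)
    (ε : ℝ) (hε0 : 0 < ε) (hε : ε ≤ 1 / 8) :
    gaussMixture d m {x | |gaussEta d m x - 1 / 2| ≤ ε}
      ≤ ENNReal.ofReal (min 1 (10 * ε / ‖m‖)) := by
  have hΔ : (0:ℝ) < ‖m‖ := norm_pos_iff.mpr hm
  have h2ε : (0:ℝ) < 1 - 2 * ε := by linarith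
  set K : ℝ := (1 + 2 * ε) / (1 - 2 * ε) with hKdef
  have hKpos : 0 < K := by positivity
  have hK1 : 1 ≤ K := by rw [hKdef, le_div_iff₀ h2ε]; linarith
  set c : ℝ := Real.log K with hcdef
  have hc0 : 0 ≤ c := Real.log_nonneg hK1
  have hcε : c ≤ 16 / 3 * ε := by
    have h1 : c ≤ K - 1 := Real.log_le_sub_one_of_pos hKpos
    have h2 : K - 1 = 4 * ε / (1 - 2 * ε) := by
      rw [hKdef]; field_simp; ring
    have h3 : 4 * ε / (1 - 2 * ε) ≤ 16 / 3 * ε := by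
      rw [div_le_iff₀ h2ε]; nlinarith
    linarith
  set S₁ : Set (EuclideanSpace ℝ (Fin d)) :=
    {x | ⟪m, x⟫ ∈ Set.Icc (‖m‖ ^ 2 / 2 - c) (‖m‖ ^ 2 / 2 + c)} with hS₁def
  have hS₁meas : MeasurableSet S₁ := by
    have hcont : Continuous fun x : EuclideanSpace ℝ (Fin d) => (⟪m, x⟫ : ℝ) :=
      continuous_const.inner continuous_id
    exact hcont.measurable measurableSet_Icc
  -- inclusion of the margin set into the slab
  have hsub : {x | |gaussEta d m x - 1 / 2| ≤ ε} ⊆ S₁ := by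
    intro x hx
    simp only [Set.mem_setOf_eq] at hx
    have hg : 0 < stdGaussianDensity d x := stdGaussianDensity_pos x
    have hr : 0 < stdGaussianDensity d (x - m) := stdGaussianDensity_pos (x - m)
    set g := stdGaussianDensity d x with hgdef
    set r := stdGaussianDensity d (x - m) with hrdef
    have hgr : 0 < g + r := by linarith
    have heta : gaussEta d m x = r / (g + r) := rfl
    rw [heta] at hx
    set t : ℝ := ⟪m, x⟫ - ‖m‖ ^ 2 / 2 with htdef
    have hratio : r = g * Real.exp t := by
      rw [hgdef, hrdef]
      unfold stdGaussianDensity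
      rw [mul_assoc, ← Real.exp_add]
      congr 1
      rw [Real.exp_eq_exp]
      have hns := norm_sub_sq_real x m
      have hcm := real_inner_comm m x
      rw [htdef]
      linarith
    obtain ⟨hx1, hx2⟩ := abs_le.mp hx
    have hA : r * (1 - 2 * ε) ≤ g * (1 + 2 * ε) := by
      have := (div_le_iff₀ hgr).mp (by linarith : r / (g + r) ≤ 1 / 2 + ε)
      nlinarith
    have hB : g * (1 - 2 * ε) ≤ r * (1 + 2 * ε) := by
      have := (le_div_iff₀ hgr).mp (by linarith : 1 / 2 - ε ≤ r / (g + r))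
      nlinarith
    have hexp1 : Real.exp t ≤ K := by
      rw [hKdef, le_div_iff₀ h2ε]
      nlinarith [Real.exp_pos t]
    have hexp2 : Real.exp (-t) ≤ K := by
      rw [hKdef, le_div_iff₀ h2ε]
      have hg' : g = r * Real.exp (-t) := by
        rw [hratio, mul_assoc, ← Real.exp_add]; simp
      nlinarith [Real.exp_pos (-t)]
    have ht1 : t ≤ c := by
      rw [hcdef]; exact (Real.le_log_iff_exp_le hKpos).mpr hexp1
    have ht2 : -t ≤ c := by
      rw [hcdef]; exact (Real.le_log_iff_exp_le hKpos).mpr hexp2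
    rw [hS₁def]
    simp only [Set.mem_setOf_eq, Set.mem_Icc]
    constructor
    · linarith [htdef ▸ ht2]
    · linarith [htdef ▸ ht1]
  -- density facts
  set ρ : EuclideanSpace ℝ (Fin d) → ℝ :=
    fun x => (stdGaussianDensity d x + stdGaussianDensity d (x - m)) / 2 with hρdef
  have hshift : Integrable (fun x : EuclideanSpace ℝ (Fin d) =>
      stdGaussianDensity d (x - m)) := by
    have h := ((measurePreserving_sub_right
        (volume : Measure (EuclideanSpace ℝ (Fin d))) m).integrable_comp_emb
        (MeasurableEquiv.subRight m).measurableEmbedding).mpr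
        (integrable_stdGaussianDensity d)
    simpa [Function.comp_def, MeasurableEquiv.subRight] using h
  have hρint : Integrable ρ := ((integrable_stdGaussianDensity d).add hshift).div_const 2
  have hρ0 : ∀ x, 0 ≤ ρ x := fun x =>
    div_nonneg (add_nonneg (stdGaussianDensity_pos x).le
      (stdGaussianDensity_pos (x - m)).le) (by norm_num)
  have happ : ∀ s : Set (EuclideanSpace ℝ (Fin d)), MeasurableSet s →
      gaussMixture d m s = ENNReal.ofReal (∫ x in s, ρ x) := by
    intro s hs
    rw [gaussMixture, withDensity_apply _ hs,
      ← ofReal_integral_eq_lintegral_ofReal hρint.integrableOn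
        (Filter.Eventually.of_forall fun x => hρ0 x)]
  -- slab integral bounds
  have hab : ‖m‖ ^ 2 / 2 - c ≤ ‖m‖ ^ 2 / 2 + c := by linarith
  have hbound1 : ∫ x in S₁, stdGaussianDensity d x ≤ c / ‖m‖ := by
    have h := euclid_inner_slab' d hd m hm (a := ‖m‖ ^ 2 / 2 - c) (b := ‖m‖ ^ 2 / 2 + c) hab
    rw [hS₁def]
    calc ∫ x in {x : EuclideanSpace ℝ (Fin d) |
            ⟪m, x⟫ ∈ Set.Icc (‖m‖ ^ 2 / 2 - c) (‖m‖ ^ 2 / 2 + c)}, stdGaussianDensity d x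
        ≤ ((‖m‖ ^ 2 / 2 + c) - (‖m‖ ^ 2 / 2 - c)) / (2 * ‖m‖) := h
      _ = c / ‖m‖ := by
          rw [show (‖m‖ ^ 2 / 2 + c) - (‖m‖ ^ 2 / 2 - c) = 2 * c by ring]
          exact mul_div_mul_left c ‖m‖ two_ne_zero
  have hbound2 : ∫ x in S₁, stdGaussianDensity d (x - m) ≤ c / ‖m‖ := by
    set T : Set (EuclideanSpace ℝ (Fin d)) :=
      {x | ⟪m, x⟫ ∈ Set.Icc (-(‖m‖ ^ 2 / 2) - c) (-(‖m‖ ^ 2 / 2) + c)} with hTdef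
    have hTmeas : MeasurableSet T := by
      have hcont : Continuous fun x : EuclideanSpace ℝ (Fin d) => (⟪m, x⟫ : ℝ) :=
        continuous_const.inner continuous_id
      exact hcont.measurable measurableSet_Icc
    have hST : S₁ = (fun x : EuclideanSpace ℝ (Fin d) => x - m) ⁻¹' T := by
      rw [hS₁def, hTdef]
      ext x
      simp only [Set.mem_preimage, Set.mem_setOf_eq, Set.mem_Icc,
        inner_sub_right, real_inner_self_eq_norm_sq]
      constructor <;> rintro ⟨h1, h2⟩ <;> exact ⟨by linarith, by linarith⟩
    have hchange : ∫ x in S₁, stdGaussianDensity d (x - m)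
        = ∫ x in T, stdGaussianDensity d x := by
      rw [← integral_indicator hS₁meas, ← integral_indicator hTmeas]
      have heq : (Set.indicator S₁ fun x => stdGaussianDensity d (x - m))
          = fun x => Set.indicator T (stdGaussianDensity d) (x - m) := by
        rw [hST]
        funext x
        exact Set.indicator_comp_right (fun x : EuclideanSpace ℝ (Fin d) => x - m)
          (s := T) (g := stdGaussianDensity d)
      rw [heq]
      exact integral_sub_right_eq_self (Set.indicator T (stdGaussianDensity d)) m
    rw [hchange]
    have h := euclid_inner_slab' d hd m hm
      (a := -(‖m‖ ^ 2 / 2) - c) (b := -(‖m‖ ^ 2 / 2) + c) (by linarith)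
    rw [hTdef]
    calc ∫ x in {x : EuclideanSpace ℝ (Fin d) |
            ⟪m, x⟫ ∈ Set.Icc (-(‖m‖ ^ 2 / 2) - c) (-(‖m‖ ^ 2 / 2) + c)}, stdGaussianDensity d x
        ≤ ((-(‖m‖ ^ 2 / 2) + c) - (-(‖m‖ ^ 2 / 2) - c)) / (2 * ‖m‖) := h
      _ = c / ‖m‖ := by
          rw [show (-(‖m‖ ^ 2 / 2) + c) - (-(‖m‖ ^ 2 / 2) - c) = 2 * c by ring]
          exact mul_div_mul_left c ‖m‖ two_ne_zero
  -- total mass is 1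
  have htotal : gaussMixture d m Set.univ = 1 := by
    rw [happ Set.univ MeasurableSet.univ, Measure.restrict_univ]
    have hone : ∫ x, ρ x = 1 := by
      rw [hρdef]
      have : (fun x : EuclideanSpace ℝ (Fin d) =>
          (stdGaussianDensity d x + stdGaussianDensity d (x - m)) / 2)
          = fun x => (stdGaussianDensity d x + stdGaussianDensity d (x - m)) / 2 := rfl
      rw [this]
      rw [integral_div, integral_add (integrable_stdGaussianDensity d) hshift,
        integral_stdGaussianDensity,
        integral_sub_right_eq_self (stdGaussianDensity d) m,
        integral_stdGaussianDensity]
      norm_num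
    rw [hone, ENNReal.ofReal_one]
  -- key quantitative bound
  have hkey : gaussMixture d m {x | |gaussEta d m x - 1 / 2| ≤ ε}
      ≤ ENNReal.ofReal (10 * ε / ‖m‖) := by
    refine le_trans (measure_mono hsub) ?_
    rw [happ S₁ hS₁meas]
    apply ENNReal.ofReal_le_ofReal
    have hint : ∫ x in S₁, ρ x
        = ((∫ x in S₁, stdGaussianDensity d x)
          + ∫ x in S₁, stdGaussianDensity d (x - m)) / 2 := by
      rw [hρdef]
      rw [integral_div, integral_add (integrable_stdGaussianDensity d).integrableOn
        hshift.integrableOn]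
    rw [hint]
    have hfin : c / ‖m‖ ≤ 10 * ε / ‖m‖ :=
      (div_le_div_iff_of_pos_right hΔ).mpr (by linarith)
    linarith
  -- conclude
  rcases le_total (1 : ℝ) (10 * ε / ‖m‖) with hc1 | hc1
  · rw [min_eq_left hc1, ENNReal.ofReal_one]
    calc gaussMixture d m {x | |gaussEta d m x - 1 / 2| ≤ ε}
        ≤ gaussMixture d m Set.univ := measure_mono (Set.subset_univ _)
      _ = 1 := htotal
  · rw [min_eq_right hc1]
    exact hkey
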